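/- For every integer N ≥ 3, if X is an N×N real symmetric matrix with zero diagonal satisfying X·W_N = 0, where W_N = cos(π/N)·I_N + (1/2)(e_1 e_N^T + e_N e_1^T) − Σ_{i=1}^{N−1}(1/2)(e_i e_{i+1}^T + e_{i+1} e_i^T), then X = 0. -/

import Mathlib

/-- The dual optimal matrix `W_N`. -/
noncomputable def Wmat (N : ℕ) : Matrix (Fin N) (Fin N) ℝ :=
  Matrix.of fun i j =>
    (if i = j then Real.cos (Real.pi / N) else 0)
    + (if ((i : ℕ) = 0 ∧ (j : ℕ) = N - 1) ∨ ((i : ℕ) = N - 1 ∧ (j : ℕ) = 0)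
        then (1 : ℝ) / 2 else 0)
    - (if (i : ℕ) + 1 = (j : ℕ) ∨ (j : ℕ) + 1 = (i : ℕ) then (1 : ℝ) / 2 else 0)

/-- The three-term recurrence satisfied by the rows of any `X` with `X * Wmat N = 0`,
valid away from the twisted corner. -/
lemma rec_step (N : ℕ) (hN : 3 ≤ N) (X : Matrix (Fin N) (Fin N) ℝ)
    (h : X * Wmat N = 0) (i : Fin N) (j : ℕ) (h1 : 1 ≤ j) (h2 : j + 2 ≤ N) :
    X i ⟨j + 1, by omega⟩ =
      2 * Real.cos (Real.pi / N) * X i ⟨j, by omega⟩ - X i ⟨j - 1, by omega⟩ := by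
  have h0 : (X * Wmat N) i ⟨j, by omega⟩ = 0 := by rw [h]; rfl
  rw [Matrix.mul_apply] at h0
  have key : ∀ k : Fin N, X i k * Wmat N k ⟨j, by omega⟩ =
      Real.cos (Real.pi / N) * (if (⟨j, by omega⟩ : Fin N) = k then X i k else 0)
      - (1/2) * (if (⟨j - 1, by omega⟩ : Fin N) = k then X i k else 0)
      - (1/2) * (if (⟨j + 1, by omega⟩ : Fin N) = k then X i k else 0) := by
    rintro ⟨kv, hkv⟩
    simp only [Wmat, Matrix.of_apply, Fin.mk.injEq, Fin.ext_iff, Fin.val_mk]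
    split_ifs <;> first | ring1 | omega
  rw [Finset.sum_congr rfl (fun k _ => key k)] at h0
  simp only [Finset.sum_sub_distrib, ← Finset.mul_sum, Finset.sum_ite_eq,
    Finset.mem_univ, if_true] at h0
  linarith

/-- Every row of `X` is a combination of the two trigonometric sequences. -/
lemma rowRep (N : ℕ) (hN : 3 ≤ N) (X : Matrix (Fin N) (Fin N) ℝ)
    (h : X * Wmat N = 0) (i : Fin N) :
    ∀ j (hj : j < N), X i ⟨j, hj⟩ =
      X i ⟨0, by omega⟩ * Real.cos (j * (Real.pi / N))
      + ((X i ⟨1, by omega⟩ - Real.cos (Real.pi / N) * X i ⟨0, by omega⟩)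
          / Real.sin (Real.pi / N)) * Real.sin (j * (Real.pi / N)) := by
  have hNpos : (0:ℝ) < N := by positivity
  have hθpos : 0 < Real.pi / N := by positivity
  have hθlt : Real.pi / N < Real.pi := by
    apply div_lt_self Real.pi_pos
    exact_mod_cast by omega
  have hs : 0 < Real.sin (Real.pi / N) := Real.sin_pos_of_pos_of_lt_pi hθpos hθlt
  intro j
  induction j using Nat.strong_induction_on with
  | _ j IH =>
    match j with
    | 0 =>
      intro hj
      simp
    | 1 =>
      intro hj
      push_cast
      rw [one_mul]
      field_simp
      ring
    | (m + 2) =>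
      intro hj
      have e1 := IH m (by omega) (by omega)
      have e2 := IH (m + 1) (by omega) (by omega)
      have hr : X i ⟨m + 2, hj⟩ =
          2 * Real.cos (Real.pi / N) * X i ⟨m + 1, by omega⟩ - X i ⟨m, by omega⟩ :=
        rec_step N hN X h i (m + 1) (by omega) (by omega)
      rw [hr, e1, e2]
      have c1 : ((m : ℝ) + 2) * (Real.pi / N) = ((m : ℝ) + 1) * (Real.pi / N) + Real.pi / N := by
        ring
      have c2 : (m : ℝ) * (Real.pi / N) = ((m : ℝ) + 1) * (Real.pi / N) - Real.pi / N := by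
        ring
      push_cast
      rw [c1, c2, Real.cos_add, Real.sin_add, Real.cos_sub, Real.sin_sub]
      ring

theorem dual_nondegenerate (N : ℕ) (hN : 3 ≤ N) (X : Matrix (Fin N) (Fin N) ℝ)
    (hsymm : X.IsSymm) (hdiag : ∀ i, X i i = 0) (h : X * Wmat N = 0) : X = 0 := by
  have hNpos : (0:ℝ) < N := by positivity
  have hN3 : (3:ℝ) ≤ N := by exact_mod_cast hN
  set θ := Real.pi / N with hθdef
  set c := Real.cos θ with hcdef
  set s := Real.sin θ with hsdef
  have hθpos : 0 < θ := by rw [hθdef]; positivity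
  have hθlt : θ < Real.pi / 2 := by
    rw [hθdef, div_lt_div_iff₀ hNpos two_pos]
    nlinarith [Real.pi_pos]
  have hs : 0 < s := Real.sin_pos_of_pos_of_lt_pi hθpos
    (lt_trans hθlt (by linarith [Real.pi_pos]))
  have hc : 0 < c := Real.cos_pos_of_mem_Ioo ⟨by linarith [Real.pi_pos], hθlt⟩
  have hpy := Real.sin_sq_add_cos_sq θ
  set F0 : Fin N := ⟨0, by omega⟩ with hF0
  set F1 : Fin N := ⟨1, by omega⟩ with hF1
  set F2 : Fin N := ⟨2, by omega⟩ with hF2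
  have hR : ∀ (i k : Fin N), X i k =
      X i F0 * Real.cos (k.1 * θ) + ((X i F1 - c * X i F0) / s) * Real.sin (k.1 * θ) :=
    fun i k => rowRep N hN X h i k.1 k.2
  set d := X F0 F1 with hd
  have hd00 : X F0 F0 = 0 := hdiag F0
  have hd11 : X F1 F1 = 0 := hdiag F1
  have hsym : ∀ i k : Fin N, X i k = X k i := fun i k => hsymm.apply k i
  -- column-0 values
  have hA : ∀ i : Fin N, X i F0 = (d / s) * Real.sin (i.1 * θ) := by
    intro i
    rw [hsym i F0, hR F0 i, hd00]
    ring
  -- column-1 values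
  have hB : ∀ i : Fin N, X i F1 = d * Real.cos (i.1 * θ) - (c * d / s) * Real.sin (i.1 * θ) := by
    intro i
    have h10 : X F1 F0 = d := by rw [hsym F1 F0]
    rw [hsym i F1, hR F1 i, h10, hd11]
    ring
  -- diagonal equation at index 2
  have e := hR F2 F2
  rw [hdiag F2, hA F2, hB F2] at e
  have hv2 : ((F2.1 : ℝ)) = 2 := by rw [hF2]; norm_num
  rw [hv2] at e
  rw [Real.sin_two_mul, Real.cos_two_mul] at e
  -- derive d = 0
  have hdz : d = 0 := by
    field_simp at e
    simp only [← hsdef, ← hcdef] at e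
    have h4 : d * (4 * c * s ^ 3) = 0 := by linear_combination s * e
    exact (mul_eq_zero.mp h4).resolve_right (by positivity)
  -- conclude
  ext i k
  rw [hR i k, hA i, hB i, hdz]
  simp
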